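/- The value of the Jacobsthal function at 13# = 30030 is 22: every 22 consecutive integers contain at least one integer coprime to 30030, and there exist 21 consecutive integers none of which is coprime to 30030. Thus j(13#) = 2·11, twice the prime preceding 13. -/

import Mathlib

def inA (u : ℕ) : Bool := u == 1 || u == 7 || u == 11 || u == 13 ||
  u == 17 || u == 19 || u == 23 || u == 29

def ok3 (m : ℕ) : Bool := inA (m % 30) && (m % 7 != 0 && (m % 11 != 0 && m % 13 != 0))

def L (u : ℕ) : ℕ := if u == 7 || u == 29 then 17
  else if u == 11 || u == 13 || u == 17 || u == 23 then 19 else 21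

def win : ℕ → ℕ → Bool
  | _, 0 => false
  | r, n+1 => ok3 r || win (r+1) n

def good (r : ℕ) : Bool := if inA (r % 30) then win r (L (r % 30)) else true

def chk : ℕ → ℕ → ℕ → Bool
  | 0, lo, hi => hi ≤ lo
  | f+1, lo, hi =>
    if hi ≤ lo then true
    else if hi = lo + 1 then good lo
    else chk f lo ((lo + hi) / 2) && chk f ((lo + hi) / 2) hi

theorem chk_sound : ∀ f lo hi, chk f lo hi = true → ∀ r, lo ≤ r → r < hi → good r = true := by
  intro f
  induction f with
  | zero => intro lo hi h r h1 h2; simp [chk, decide_eq_true_iff] at h; omega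
  | succ f ih =>
    intro lo hi h r h1 h2
    rw [chk] at h
    split at h
    · omega
    · next h3 =>
      split at h
      · next h4 => have : r = lo := by omega
                   subst this; exact h
      · next h4 =>
        rw [Bool.and_eq_true] at h
        rcases Nat.lt_or_ge r ((lo+hi)/2) with h5 | h5
        · exact ih lo ((lo+hi)/2) h.1 r h1 h5
        · exact ih ((lo+hi)/2) hi h.2 r h5 h2

theorem chk_true : chk 16 0 30036 = true := by decide +kernel

theorem okc (m : ℕ) (h : ok3 m = true) : Nat.gcd m 30030 = 1 := by
  simp only [ok3, inA, Bool.and_eq_true, Bool.or_eq_true, beq_iff_eq,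
    bne_iff_ne, ne_eq] at h
  obtain ⟨hA, h7, h11, h13⟩ := h
  have d2 : ¬ (2 ∣ m) := by omega
  have d3 : ¬ (3 ∣ m) := by omega
  have d5 : ¬ (5 ∣ m) := by omega
  have d7 : ¬ (7 ∣ m) := by omega
  have d11 : ¬ (11 ∣ m) := by omega
  have d13 : ¬ (13 ∣ m) := by omega
  have e : (30030:ℕ) = 2*(3*(5*(7*(11*13)))) := by norm_num
  have : Nat.Coprime m 30030 := by
    rw [e]
    repeat' rw [Nat.coprime_mul_iff_right]
    exact ⟨((Nat.Prime.coprime_iff_not_dvd (by norm_num)).mpr d2).symm,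
      ((Nat.Prime.coprime_iff_not_dvd (by norm_num)).mpr d3).symm,
      ((Nat.Prime.coprime_iff_not_dvd (by norm_num)).mpr d5).symm,
      ((Nat.Prime.coprime_iff_not_dvd (by norm_num)).mpr d7).symm,
      ((Nat.Prime.coprime_iff_not_dvd (by norm_num)).mpr d11).symm,
      ((Nat.Prime.coprime_iff_not_dvd (by norm_num)).mpr d13).symm⟩
  exact this

theorem win_spec : ∀ n r, win r n = true → ∃ t, t < n ∧ ok3 (r + t) = true := by
  intro n
  induction n with
  | zero => intro r h; simp [win] at h
  | succ n ih =>
    intro r h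
    rw [win, Bool.or_eq_true] at h
    rcases h with h | h
    · exact ⟨0, Nat.succ_pos n, h⟩
    · obtain ⟨t, ht, h⟩ := ih (r+1) h
      exact ⟨t+1, by omega, by rw [show r + (t+1) = r + 1 + t by omega]; exact h⟩

theorem small : ∀ u : ℕ, u < 30 →
    ∃ d : ℕ, d ≤ 5 ∧ inA ((u + d) % 30) = true ∧ d + L ((u + d) % 30) ≤ 22 := by decide

theorem key : ∀ r : ℕ, r < 30030 → ∃ t : ℕ, t < 22 ∧ Nat.gcd (r + t) 30030 = 1 := by
  intro r hr
  obtain ⟨d, hd5, hA, hL⟩ := small (r % 30) (Nat.mod_lt _ (by norm_num))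
  have hmod : (r % 30 + d) % 30 = (r + d) % 30 := by
    conv_rhs => rw [Nat.add_mod]
    rw [Nat.mod_eq_of_lt (show d < 30 by omega)]
  rw [hmod] at hA hL
  have hgood : good (r + d) = true :=
    chk_sound 16 0 30036 chk_true (r + d) (Nat.zero_le _) (by omega)
  rw [good, if_pos hA] at hgood
  obtain ⟨t, ht, hok⟩ := win_spec _ _ hgood
  exact ⟨d + t, by omega, by rw [← Nat.add_assoc]; exact okc _ hok⟩

lemma bad : ∀ t : ℕ, t < 21 → Nat.gcd (9440 + t) 30030 ≠ 1 := by decide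

/-- The Jacobsthal function at `13# = 30030` equals `22 = 2·11`: every `22` consecutive
integers contain one coprime to `30030`, and there are `21` consecutive integers none of
which is coprime to `30030`. -/
theorem jacobsthal_primorial_thirteen :
    (∀ a : ℤ, ∃ k : ℤ, a ≤ k ∧ k < a + 22 ∧ IsCoprime k (30030 : ℤ)) ∧
      (∃ a : ℤ, ∀ k : ℤ, a ≤ k → k < a + 21 → ¬ IsCoprime k (30030 : ℤ)) ∧
      22 = 2 * 11 := by
  refine ⟨?_, ⟨9440, ?_⟩, rfl⟩
  · intro a
    have h0 : (0:ℤ) ≤ a % 30030 := Int.emod_nonneg a (by norm_num)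
    have h1 : a % 30030 < 30030 := Int.emod_lt_of_pos a (by norm_num)
    set r : ℕ := (a % 30030).toNat with hr
    have hrlt : r < 30030 := by omega
    have hreq : (r : ℤ) = a % 30030 := Int.toNat_of_nonneg h0
    obtain ⟨t, ht, hg⟩ := key r hrlt
    refine ⟨a + t, by omega, by omega, ?_⟩
    have hcop : IsCoprime ((r + t : ℕ) : ℤ) (30030 : ℤ) := by
      rw [Int.isCoprime_iff_gcd_eq_one]
      rw [show (30030:ℤ) = ((30030:ℕ):ℤ) by rfl, Int.gcd_natCast_natCast]; exact hg
    have heq : a + (t:ℤ) = (↑(r + t)) + 30030 * (a / 30030) := by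
      push_cast
      have := Int.emod_add_mul_ediv a 30030
      omega
    rw [heq]
    exact hcop.add_mul_left_left _
  · intro k hk hk'
    rw [Int.isCoprime_iff_gcd_eq_one]
    have h0 : (0:ℤ) ≤ k - 9440 := by omega
    set t : ℕ := (k - 9440).toNat with htdef
    have hteq : (t:ℤ) = k - 9440 := Int.toNat_of_nonneg h0
    have htlt : t < 21 := by omega
    have : k = ((9440 + t : ℕ) : ℤ) := by push_cast; omega
    rw [this]
    rw [show (30030:ℤ) = ((30030:ℕ):ℤ) by rfl, Int.gcd_natCast_natCast]; exact bad t htlt
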